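/- Let $H$ be a Hopf algebra over a field $k$ with antipode $S$, let $D$ be an $H$-module algebra, $U$ a right $H$-comodule, and $V$ a right $D$-module. Equip $U \otimes_k V$ with the twisted right $D$-module structure $(u \otimes v)\cdot d = \sum u_{(0)} \otimes v\,(S(u_{(1)})d)$. Then the annihilator in $D$ of the twisted module $H \otimes_k V$ (where $H$ is a comodule over itself via comultiplication) equals the largest $S(H)$-stable ideal of $D$ contained in the annihilator of $V$, namely $\{d \in D \mid S(H)d \subseteq \operatorname{Ann}_D V\}$. -/

import Mathlib

open TensorProduct MulOpposite

/-- The `k`-linear map `h ↦ h • a` associated to a linear action of `H` on `A`. -/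
def actL (k H A : Type*) [CommSemiring k] [Semiring H] [Module k H]
    [AddCommMonoid A] [Module k A] [Module H A] [IsScalarTower k H A] (a : A) :
    H →ₗ[k] A where
  toFun h := h • a
  map_add' h h' := add_smul h h' a
  map_smul' c h := by simp [smul_assoc]

variable (k H D V : Type*) [Field k] [Ring H] [HopfAlgebra k H]
  [Ring D] [Algebra k D] [Module H D] [IsScalarTower k H D]
  [AddCommGroup V] [Module k V] [Module Dᵐᵒᵖ V]
  [IsScalarTower k Dᵐᵒᵖ V] [SMulCommClass Dᵐᵒᵖ k V]

/-- The bilinear map `(h, v) ↦ v · (S(h) d)` underlying the twisted action. -/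
noncomputable def actTwist (d : D) : H →ₗ[k] V →ₗ[k] V :=
  LinearMap.mk₂ k (fun h v => op ((HopfAlgebra.antipode (R := k) h) • d) • v)
    (fun h h' v => by simp [map_add, add_smul, op_add])
    (fun c h v => by simp [map_smul, smul_assoc, op_smul])
    (fun h v v' => by simp [smul_add])
    (fun c h v => smul_comm _ c v)

/-- The twisted action of `d ∈ D` on `H ⊗ V`:
`(u ⊗ v) · d = ∑ u₍₁₎ ⊗ v · (S(u₍₂₎) d)`, where `H` is a comodule over itself via the
comultiplication. -/
noncomputable def twistedAction (d : D) : H ⊗[k] V →ₗ[k] H ⊗[k] V :=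
  LinearMap.lTensor H (TensorProduct.lift (actTwist k H D V d)) ∘ₗ
    (TensorProduct.assoc k H H V).toLinearMap ∘ₗ
    LinearMap.rTensor V (Coalgebra.comul (R := k))

/-- The annihilator in an `H`-module algebra `D` of the twisted right `D`-module
`H ⊗ V` equals the largest `S(H)`-stable ideal contained in the annihilator of `V`,
namely `{d | S(H) d ⊆ Ann_D V}`. -/
theorem annihilator_twisted_module
    (hmul : ∀ (h : H) (a b : D), h • (a * b) =
      LinearMap.mul' k D (TensorProduct.map (actL k H D a) (actL k H D b)
        (Coalgebra.comul (R := k) h)))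
    (hone : ∀ h : H, h • (1 : D) = Coalgebra.counit (R := k) h • (1 : D)) :
    ∀ d : D, (∀ x : H ⊗[k] V, twistedAction k H D V d x = 0) ↔
      ∀ (h : H) (v : V), op ((HopfAlgebra.antipode (R := k) h) • d) • v = 0 := by
  intro d
  constructor
  · intro hz h v
    -- Ψ : H ⊗ V → V, counit on first factor
    set Ψ : H ⊗[k] V →ₗ[k] V :=
      (TensorProduct.lid k V).toLinearMap ∘ₗ
        LinearMap.rTensor V (Coalgebra.counit (R := k) (A := H)) with hΨ
    set J : H →ₗ[k] V := (actTwist k H D V d).flip v with hJ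
    set G : H ⊗[k] V →ₗ[k] V := TensorProduct.lift (actTwist k H D V d) with hG
    set F : H ⊗[k] H →ₗ[k] V :=
      Ψ ∘ₗ LinearMap.lTensor H G ∘ₗ (TensorProduct.assoc k H H V).toLinearMap ∘ₗ
        (TensorProduct.mk k (H ⊗[k] H) V).flip v with hF
    set K : H ⊗[k] H →ₗ[k] V :=
      J ∘ₗ (TensorProduct.lid k H).toLinearMap ∘ₗ
        LinearMap.rTensor H (Coalgebra.counit (R := k) (A := H)) with hK
    have hFK : F = K := by
      apply TensorProduct.ext'
      intro a b
      simp [hF, hK, hΨ, hG, hJ, actTwist]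
    have h1 : op ((HopfAlgebra.antipode (R := k) h) • d) • v
        = K (Coalgebra.comul (R := k) h) := by
      simp [hK, Coalgebra.rTensor_counit_comul, hJ, actTwist]
    have h2 : F (Coalgebra.comul (R := k) h) = Ψ (twistedAction k H D V d (h ⊗ₜ v)) := by
      simp [hF, hG, twistedAction]
    rw [h1, ← hFK, h2, hz, map_zero]
  · intro hz x
    have : TensorProduct.lift (actTwist k H D V d) = 0 := by
      apply TensorProduct.ext'
      intro h v
      simpa [actTwist] using hz h v
    simp [twistedAction, this]
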